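/- Let T > 0, let γ : [0,T] → ℝ be measurable with γ(u) ≥ γ̲ > 0 for all u, and let h ∈ L²([0,T]). Define ψ(t) = ∫_t^T h(s) exp(−∫_t^s γ(u) du) ds for t ∈ [0,T]. Then ∫_0^T ψ(t)² dt ≤ ((1 − e^{−γ̲ T})/γ̲²) ∫_0^T h(s)² ds. -/

import Mathlib

open MeasureTheory Set

/-- FTC evaluation of `∫ exp (c x + r)`. -/
lemma int_exp_aux (c : ℝ) (hc : c ≠ 0) (r a b : ℝ) :
    ∫ x in a..b, Real.exp (c * x + r)
      = (Real.exp (c * b + r) - Real.exp (c * a + r)) / c := by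
  have hd : ∀ x : ℝ, HasDerivAt (fun x => Real.exp (c * x + r) / c)
      (Real.exp (c * x + r)) x := by
    intro x
    have h1 : HasDerivAt (fun x : ℝ => c * x + r) c x :=
      by simpa using ((hasDerivAt_id x).const_mul c).add_const r
    have h2 := h1.exp
    have h3 := h2.div_const c
    simpa [mul_div_assoc, div_self hc] using h3
  have := intervalIntegral.integral_eq_sub_of_hasDerivAt
    (fun x _ => hd x)
    ((Real.continuous_exp.comp (by continuity)).intervalIntegrable a b)
  rw [this]; ring

/-- Cauchy–Schwarz for integrals of nonnegative functions. -/
lemma cs_integral {μ : Measure ℝ} {f g : ℝ → ℝ}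
    (hf0 : 0 ≤ᵐ[μ] f) (hg0 : 0 ≤ᵐ[μ] g)
    (hfm : AEStronglyMeasurable f μ) (hgm : AEStronglyMeasurable g μ)
    (hf2 : Integrable (fun x => f x ^ 2) μ) (hg2 : Integrable (fun x => g x ^ 2) μ) :
    (∫ x, f x * g x ∂μ) ^ 2 ≤ (∫ x, f x ^ 2 ∂μ) * ∫ x, g x ^ 2 ∂μ := by
  have hpq : Real.HolderConjugate 2 2 := Real.holderConjugate_iff.mpr ⟨one_lt_two, by norm_num⟩
  have h2 : (ENNReal.ofReal (2:ℝ)) = 2 := by norm_num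
  have hf : MemLp f (ENNReal.ofReal (2:ℝ)) μ := by
    rw [h2]; exact (memLp_two_iff_integrable_sq hfm).2 hf2
  have hg : MemLp g (ENNReal.ofReal (2:ℝ)) μ := by
    rw [h2]; exact (memLp_two_iff_integrable_sq hgm).2 hg2
  have H := integral_mul_le_Lp_mul_Lq_of_nonneg hpq hf0 hg0 hf hg
  have hA : (0:ℝ) ≤ ∫ x, f x ^ 2 ∂μ := integral_nonneg fun x => sq_nonneg _
  have hB : (0:ℝ) ≤ ∫ x, g x ^ 2 ∂μ := integral_nonneg fun x => sq_nonneg _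
  have hrw : ∀ (u : ℝ → ℝ), (∫ x, u x ^ (2:ℝ) ∂μ) = ∫ x, u x ^ 2 ∂μ := by
    intro u; congr 1; ext x
    rw [show ((2:ℝ)) = ((2:ℕ):ℝ) by norm_num, Real.rpow_natCast]
  rw [hrw f, hrw g] at H
  have hC : (0:ℝ) ≤ ∫ x, f x * g x ∂μ := by
    apply integral_nonneg_of_ae
    filter_upwards [hf0, hg0] with x h1x h2x using mul_nonneg h1x h2x
  calc (∫ x, f x * g x ∂μ) ^ 2
      ≤ ((∫ x, f x ^ 2 ∂μ) ^ ((1:ℝ)/2) * (∫ x, g x ^ 2 ∂μ) ^ ((1:ℝ)/2)) ^ 2 := by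
        apply pow_le_pow_left₀ hC H
    _ = (∫ x, f x ^ 2 ∂μ) * ∫ x, g x ^ 2 ∂μ := by
        rw [mul_pow, ← Real.rpow_natCast (_ ^ ((1:ℝ)/2)) 2,
          ← Real.rpow_natCast (_ ^ ((1:ℝ)/2)) 2,
          ← Real.rpow_mul hA, ← Real.rpow_mul hB]
        norm_num

theorem backward_kernel_L2_estimate
    (T γlo : ℝ) (hT : 0 < T) (hγlo : 0 < γlo)
    (γ : ℝ → ℝ) (hγm : Measurable γ) (hγint : IntegrableOn γ (Icc 0 T))
    (hγge : ∀ u ∈ Icc (0 : ℝ) T, γlo ≤ γ u)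
    (h : ℝ → ℝ) (hm : Measurable h)
    (hL2 : IntegrableOn (fun s => h s ^ 2) (Icc 0 T))
    (ψ : ℝ → ℝ)
    (hψ : ∀ t ∈ Icc (0 : ℝ) T,
      ψ t = ∫ s in t..T, h s * Real.exp (-(∫ u in t..s, γ u))) :
    (∫ t in (0 : ℝ)..T, ψ t ^ 2) ≤
      (1 - Real.exp (-(γlo * T))) / γlo ^ 2 * ∫ s in (0 : ℝ)..T, h s ^ 2 := by
  set μ := volume.restrict (Ioc (0:ℝ) T) with hμdef
  set C1 : ℝ := (1 - Real.exp (-(γlo * T))) / γlo with hC1def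
  have hC1nonneg : 0 ≤ C1 := by
    apply div_nonneg _ hγlo.le
    have : Real.exp (-(γlo * T)) ≤ 1 := Real.exp_le_one_iff.2 (by nlinarith)
    linarith
  have hIocIcc : Ioc (0:ℝ) T ⊆ Icc 0 T := Ioc_subset_Icc_self
  -- h is integrable on [0,T]
  have hhInt : IntegrableOn h (Icc 0 T) := by
    refine Integrable.mono' (g := fun s => (1 + h s ^ 2) / 2) ?_ ?_ ?_
    · exact ((integrableOn_const measure_Icc_lt_top.ne).add hL2).div_const 2
    · exact hm.aestronglyMeasurable.restrict
    · refine ae_of_all _ fun s => ?_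
      have := sq_nonneg (|h s| - 1)
      rw [Real.norm_eq_abs]
      nlinarith [sq_abs (h s)]
  -- kernel bound
  have hKb : ∀ t ∈ Icc (0:ℝ) T, ∀ s ∈ Ioc t T,
      Real.exp (-(∫ u in t..s, γ u)) ≤ Real.exp (-(γlo * (s - t))) := by
    intro t ht s hs
    apply Real.exp_le_exp.2
    apply neg_le_neg
    have hts : t ≤ s := hs.1.le
    have hIccsub : Icc t s ⊆ Icc 0 T := Icc_subset_Icc ht.1 (hs.2)
    have hγiv : IntervalIntegrable γ volume t s := by
      rw [intervalIntegrable_iff_integrableOn_Icc_of_le hts]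
      exact hγint.mono_set hIccsub
    have hciv : IntervalIntegrable (fun _ => γlo) volume t s := intervalIntegrable_const
    have := intervalIntegral.integral_mono_on hts hciv hγiv
      (fun x hx => hγge x (hIccsub hx))
    rwa [intervalIntegral.integral_const, smul_eq_mul, mul_comm] at this
  -- |ψ t| bound
  have hψabs : ∀ t ∈ Icc (0:ℝ) T,
      |ψ t| ≤ ∫ s in Ioc t T, |h s| * Real.exp (-(γlo * (s - t))) := by
    intro t ht
    have hIocsub : Ioc t T ⊆ Icc 0 T := fun x hx => ⟨le_trans ht.1 hx.1.le, hx.2⟩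
    have hgint : IntegrableOn (fun s => |h s| * Real.exp (-(γlo * (s - t)))) (Ioc t T) := by
      refine Integrable.mono' (g := fun s => |h s|) (IntegrableOn.mono_set hhInt.abs hIocsub) ?_ ?_
      · exact ((hm.abs.mul (by fun_prop : Measurable fun s =>
          Real.exp (-(γlo * (s - t))))).aestronglyMeasurable).restrict
      · refine (ae_restrict_iff' measurableSet_Ioc).2 (ae_of_all _ fun s hs => ?_)
        rw [Real.norm_eq_abs, abs_mul, abs_of_nonneg (Real.exp_pos _).le, abs_abs]
        have : Real.exp (-(γlo * (s - t))) ≤ 1 := by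
          apply Real.exp_le_one_iff.2
          nlinarith [hs.1.le, sub_nonneg.2 hs.1.le]
        nlinarith [abs_nonneg (h s), Real.exp_pos (-(γlo * (s - t)))]
    rw [hψ t ht, intervalIntegral.integral_of_le ht.2, ← Real.norm_eq_abs]
    refine norm_integral_le_of_norm_le hgint ?_
    refine (ae_restrict_iff' measurableSet_Ioc).2 (ae_of_all _ fun s hs => ?_)
    rw [Real.norm_eq_abs, abs_mul, abs_of_nonneg (Real.exp_pos _).le]
    exact mul_le_mul_of_nonneg_left (hKb t ht s hs) (abs_nonneg _)
  -- Cauchy–Schwarz step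
  have hCS : ∀ t ∈ Icc (0:ℝ) T,
      (∫ s in Ioc t T, |h s| * Real.exp (-(γlo * (s - t)))) ^ 2 ≤
        (∫ s in Ioc t T, Real.exp (-(γlo * (s - t)))) *
          ∫ s in Ioc t T, Real.exp (-(γlo * (s - t))) * h s ^ 2 := by
    intro t ht
    have hIocsub : Ioc t T ⊆ Icc 0 T := fun x hx => ⟨le_trans ht.1 hx.1.le, hx.2⟩
    set f : ℝ → ℝ := fun s => Real.exp (-(γlo * (s - t)) / 2) with hfdef
    set g : ℝ → ℝ := fun s => |h s| * Real.exp (-(γlo * (s - t)) / 2) with hgdef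
    have hfm : Measurable f := by fun_prop
    have hgm : Measurable g := hm.abs.mul (by fun_prop)
    have hf2 : Integrable (fun s => f s ^ 2) (volume.restrict (Ioc t T)) := by
      have : Continuous fun s => f s ^ 2 := by fun_prop
      exact (this.integrableOn_Ioc)
    have hg2 : Integrable (fun s => g s ^ 2) (volume.restrict (Ioc t T)) := by
      refine Integrable.mono' (g := fun s => h s ^ 2) (hL2.mono_set hIocsub) ?_ ?_
      · exact ((hgm.pow_const 2).aestronglyMeasurable).restrict
      · refine (ae_restrict_iff' measurableSet_Ioc).2 (ae_of_all _ fun s hs => ?_)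
        have he : Real.exp (-(γlo * (s - t)) / 2) ≤ 1 := by
          apply Real.exp_le_one_iff.2
          nlinarith [sub_nonneg.2 hs.1.le]
        have he2 : Real.exp (-(γlo * (s - t)) / 2) ^ 2 ≤ 1 :=
          pow_le_one₀ (Real.exp_pos _).le he
        rw [Real.norm_eq_abs, hgdef]
        simp only [mul_pow, sq_abs]
        rw [abs_of_nonneg (by positivity)]
        nlinarith [sq_nonneg (h s)]
    have H := cs_integral (μ := volume.restrict (Ioc t T))
      (ae_of_all _ fun s => (Real.exp_pos _).le)
      (ae_of_all _ fun s => by positivity)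
      hfm.aestronglyMeasurable.restrict hgm.aestronglyMeasurable.restrict hf2 hg2
    have e1 : (fun s => f s * g s) = fun s => |h s| * Real.exp (-(γlo * (s - t))) := by
      funext s
      simp only [hfdef, hgdef]
      rw [show -(γlo * (s - t)) = -(γlo * (s - t)) / 2 + -(γlo * (s - t)) / 2 by ring,
        Real.exp_add]
      ring
    have e2 : (fun s => f s ^ 2) = fun s => Real.exp (-(γlo * (s - t))) := by
      funext s
      simp only [hfdef]
      rw [sq, ← Real.exp_add]
      congr 1; ring
    have e3 : (fun s => g s ^ 2) = fun s => Real.exp (-(γlo * (s - t))) * h s ^ 2 := by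
      funext s
      simp only [hgdef]
      rw [mul_pow, sq_abs,
        show Real.exp (-(γlo * (s - t)) / 2) ^ 2 = Real.exp (-(γlo * (s - t))) from by
          rw [sq, ← Real.exp_add]; congr 1; ring]
      ring
    rw [e1, e2, e3] at H
    exact H
  -- kernel integral bound
  have hKint : ∀ t ∈ Icc (0:ℝ) T,
      (∫ s in Ioc t T, Real.exp (-(γlo * (s - t)))) ≤ C1 := by
    intro t ht
    rw [← intervalIntegral.integral_of_le ht.2]
    have e : ∀ s : ℝ, Real.exp (-(γlo * (s - t))) = Real.exp ((-γlo) * s + γlo * t) := by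
      intro s; congr 1; ring
    simp only [e]
    rw [int_exp_aux (-γlo) (neg_ne_zero.2 hγlo.ne') (γlo * t) t T]
    rw [show (-γlo) * t + γlo * t = 0 by ring, Real.exp_zero]
    rw [show (Real.exp ((-γlo) * T + γlo * t) - 1) / (-γlo)
        = (1 - Real.exp ((-γlo) * T + γlo * t)) / γlo by ring]
    rw [hC1def]
    gcongr
    nlinarith [ht.1]
  -- the kernel-weighted integral of h^2
  set Gun : ℝ × ℝ → ℝ := fun p =>
    if p.1 < p.2 then Real.exp (-(γlo * (p.2 - p.1))) * h p.2 ^ 2 else 0 with hGdef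
  have hGnonneg : ∀ p, 0 ≤ Gun p := by
    intro p
    rw [hGdef]
    simp only
    split
    · positivity
    · exact le_rfl
  have hGm : Measurable Gun := by
    apply Measurable.ite (measurableSet_lt measurable_fst measurable_snd)
    · exact (by fun_prop : Measurable fun p : ℝ × ℝ =>
        Real.exp (-(γlo * (p.2 - p.1)))).mul ((hm.comp measurable_snd).pow_const 2)
    · exact measurable_const
  have hL2μ : Integrable (fun s => h s ^ 2) μ := hL2.mono_set hIocIcc
  have hGint : Integrable Gun (μ.prod μ) := by
    refine Integrable.mono' (g := fun p => (1:ℝ) * h p.2 ^ 2)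
      (Integrable.mul_prod (integrableOn_const (C := (1:ℝ)) measure_Ioc_lt_top.ne : Integrable (fun _ => (1:ℝ)) μ) hL2μ)
      hGm.aestronglyMeasurable ?_
    refine ae_of_all _ fun p => ?_
    simp only [one_mul]
    rw [Real.norm_eq_abs, abs_of_nonneg (hGnonneg p), hGdef]
    simp only
    split
    · rename_i hlt
      have : Real.exp (-(γlo * (p.2 - p.1))) ≤ 1 := by
        apply Real.exp_le_one_iff.2
        nlinarith [sub_pos.2 hlt]
      nlinarith [sq_nonneg (h p.2), Real.exp_pos (-(γlo * (p.2 - p.1)))]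
    · positivity
  set KW : ℝ → ℝ := fun t => ∫ s, Gun (t, s) ∂μ with hKWdef
  have hKWint : Integrable KW μ := hGint.integral_prod_left
  -- identify KW with the Ioc-integral
  have hKWeq : ∀ t ∈ Ioc (0:ℝ) T,
      KW t = ∫ s in Ioc t T, Real.exp (-(γlo * (s - t))) * h s ^ 2 := by
    intro t ht
    rw [hKWdef]
    simp only
    have e : (fun s => Gun (t, s)) =
        (Ioi t).indicator (fun s => Real.exp (-(γlo * (s - t))) * h s ^ 2) := by
      funext s
      rw [hGdef, indicator_apply]
      simp [mem_Ioi]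
    rw [hμdef, e, setIntegral_indicator measurableSet_Ioi,
      Ioc_inter_Ioi, sup_eq_right.2 ht.1.le]
  -- step A: pointwise bound on ψ^2
  have hA : ∀ t ∈ Ioc (0:ℝ) T, ψ t ^ 2 ≤ C1 * KW t := by
    intro t ht
    have ht' : t ∈ Icc (0:ℝ) T := hIocIcc ht
    have hnn : 0 ≤ ∫ s in Ioc t T, |h s| * Real.exp (-(γlo * (s - t))) :=
      setIntegral_nonneg measurableSet_Ioc fun s _ => by positivity
    have hnn2 : 0 ≤ ∫ s in Ioc t T, Real.exp (-(γlo * (s - t))) * h s ^ 2 :=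
      setIntegral_nonneg measurableSet_Ioc fun s _ => by positivity
    calc ψ t ^ 2 = |ψ t| ^ 2 := (sq_abs _).symm
      _ ≤ (∫ s in Ioc t T, |h s| * Real.exp (-(γlo * (s - t)))) ^ 2 :=
          pow_le_pow_left₀ (abs_nonneg _) (hψabs t ht') 2
      _ ≤ (∫ s in Ioc t T, Real.exp (-(γlo * (s - t)))) *
            ∫ s in Ioc t T, Real.exp (-(γlo * (s - t))) * h s ^ 2 := hCS t ht'
      _ ≤ C1 * ∫ s in Ioc t T, Real.exp (-(γlo * (s - t))) * h s ^ 2 :=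
          mul_le_mul_of_nonneg_right (hKint t ht') hnn2
      _ = C1 * KW t := by rw [hKWeq t ht]
  -- inner bound after swapping
  have hInner : ∀ s ∈ Ioc (0:ℝ) T, (∫ t, Gun (t, s) ∂μ) ≤ h s ^ 2 * (1 / γlo) := by
    intro s hs
    have e : (fun t => Gun (t, s)) =
        (Iio s).indicator (fun t => Real.exp (-(γlo * (s - t))) * h s ^ 2) := by
      funext t
      rw [hGdef, indicator_apply]
      simp [mem_Iio]
    have hset : Ioc (0:ℝ) T ∩ Iio s = Ioo 0 s := by
      ext t
      constructor
      · rintro ⟨⟨h1, _⟩, h3⟩; exact ⟨h1, h3⟩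
      · rintro ⟨h1, h3⟩; exact ⟨⟨h1, le_trans h3.le hs.2⟩, h3⟩
    rw [hμdef, e, setIntegral_indicator measurableSet_Iio, hset,
      ← integral_Ioc_eq_integral_Ioo, ← intervalIntegral.integral_of_le hs.1.le]
    rw [intervalIntegral.integral_mul_const]
    have e2 : ∀ t : ℝ, Real.exp (-(γlo * (s - t))) = Real.exp (γlo * t + -(γlo * s)) := by
      intro t; congr 1; ring
    simp only [e2]
    rw [int_exp_aux γlo hγlo.ne' (-(γlo * s)) 0 s]
    rw [show γlo * s + -(γlo * s) = 0 by ring, Real.exp_zero,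
      show γlo * 0 + -(γlo * s) = -(γlo * s) by ring]
    rw [mul_comm (h s ^ 2) (1 / γlo)]
    apply mul_le_mul_of_nonneg_right _ (sq_nonneg _)
    have := (Real.exp_pos (-(γlo * s))).le
    rw [div_le_div_iff₀ hγlo hγlo]
    nlinarith
  -- assemble
  have hD0 : 0 ≤ ∫ s in Ioc (0:ℝ) T, h s ^ 2 :=
    setIntegral_nonneg measurableSet_Ioc fun s _ => sq_nonneg _
  rw [intervalIntegral.integral_of_le hT.le, intervalIntegral.integral_of_le hT.le]
  have step1 : (∫ t in Ioc (0:ℝ) T, ψ t ^ 2) ≤ ∫ t, C1 * KW t ∂μ := by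
    refine integral_mono_of_nonneg (ae_of_all _ fun t => sq_nonneg _)
      (hKWint.const_mul C1) ?_
    exact (ae_restrict_iff' measurableSet_Ioc).2 (ae_of_all _ hA)
  have step2 : (∫ t, C1 * KW t ∂μ) = C1 * ∫ t, KW t ∂μ := integral_const_mul _ _
  have step3 : (∫ t, KW t ∂μ) = ∫ s, (∫ t, Gun (t, s) ∂μ) ∂μ := by
    exact integral_integral_swap (f := fun t s => Gun (t, s)) hGint
  have step4 : (∫ s, (∫ t, Gun (t, s) ∂μ) ∂μ) ≤ ∫ s, h s ^ 2 * (1 / γlo) ∂μ := by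
    refine integral_mono_of_nonneg
      (ae_of_all _ fun s => integral_nonneg fun t => hGnonneg _)
      (hL2μ.mul_const _) ?_
    exact (ae_restrict_iff' measurableSet_Ioc).2 (ae_of_all _ hInner)
  have step5 : (∫ s, h s ^ 2 * (1 / γlo) ∂μ) = (∫ s in Ioc (0:ℝ) T, h s ^ 2) * (1 / γlo) :=
    integral_mul_const _ _
  have hKWnonneg : 0 ≤ ∫ t, KW t ∂μ := by
    rw [hKWdef]
    exact integral_nonneg fun t => integral_nonneg fun s => hGnonneg _
  calc (∫ t in Ioc (0:ℝ) T, ψ t ^ 2)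
      ≤ C1 * ∫ t, KW t ∂μ := by rw [← step2]; exact step1
    _ ≤ C1 * ((∫ s in Ioc (0:ℝ) T, h s ^ 2) * (1 / γlo)) := by
        apply mul_le_mul_of_nonneg_left _ hC1nonneg
        rw [step3, ← step5]
        exact step4
    _ = (1 - Real.exp (-(γlo * T))) / γlo ^ 2 * ∫ s in Ioc (0:ℝ) T, h s ^ 2 := by
        rw [hC1def]
        ring
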